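/- Let β₁, β₄, ν⁺, ν⁻, σ⁺, σ⁻ > 0 and suppose D := (β₁ν⁻ + β₄ν⁺)² − 4(β₁+β₄)(β₁σ⁻ + β₄σ⁺) > 0. For r > 0 define the quartic polynomial p_r(λ) = λ⁴ + (ν⁺+ν⁻)r² λ³ + [(β₁+β₄)r² + (σ⁺+σ⁻+ν⁺ν⁻)r⁴] λ² + [(β₁ν⁻+β₄ν⁺)r⁴ + (ν⁺σ⁻+ν⁻σ⁺)r⁶] λ + (β₁σ⁻+β₄σ⁺)r⁶ + σ⁺σ⁻ r⁸. Then there exist η₁ > 0 and functions λ₁, λ₂, λ₃, λ₄ : (0, η₁] → ℂ such that for every r ∈ (0, η₁] the multiset {λ₁(r), λ₂(r), λ₃(r), λ₄(r)} is exactly the multiset of roots of p_r, λ₂(r) is the complex conjugate of λ₁(r), λ₃(r) and λ₄(r) are real, and as r → 0⁺: λ₁(r) = −((β₁ν⁺+β₄ν⁻)/(2(β₁+β₄))) r² + i √(β₁+β₄) r + O(r³), λ₃(r) = ((−(β₁ν⁻+β₄ν⁺) + √D)/(2(β₁+β₄))) r² + O(r⁴), and λ₄(r) = ((−(β₁ν⁻+β₄ν⁺)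 − √D)/(2(β₁+β₄))) r² + O(r⁴). -/

import Mathlib

private lemma sqrt_diff_le (X Y : ℝ) (hX : 0 ≤ X) (hY : 0 < Y) :
    |Real.sqrt X - Real.sqrt Y| ≤ |X - Y| / Real.sqrt Y := by
  have hsY : 0 < Real.sqrt Y := Real.sqrt_pos.2 hY
  rw [le_div_iff₀ hsY]
  have h1 : |Real.sqrt X - Real.sqrt Y| * (Real.sqrt X + Real.sqrt Y) = |X - Y| := by
    rw [← abs_of_nonneg (a := Real.sqrt X + Real.sqrt Y) (by positivity), ← abs_mul]
    congr 1
    nlinarith [Real.sq_sqrt hX, Real.sq_sqrt hY.le]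
  calc |Real.sqrt X - Real.sqrt Y| * Real.sqrt Y
      ≤ |Real.sqrt X - Real.sqrt Y| * (Real.sqrt X + Real.sqrt Y) := by
        apply mul_le_mul_of_nonneg_left _ (abs_nonneg _)
        nlinarith [Real.sqrt_nonneg X]
    _ = |X - Y| := h1

private lemma quad_perturb (b d Gs t : ℝ) (hb : 0 < b) (hd : 0 < d) (hGs : 0 ≤ Gs)
    (ht : 0 < t) (g : ℝ → ℝ) (hg : Continuous g)
    (hgb : ∀ u : ℝ, |u| ≤ (Gs+1)/d * t → |g u| ≤ Gs)
    (hsmall : b * ((Gs+1)/d)^2 * t ≤ 1/2) :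
    ∃ u : ℝ, |u| ≤ (Gs+1)/d * t ∧ b*u^2 + d*u + t * g u = 0 := by
  set K := (Gs+1)/d with hK
  have hKpos : 0 < K := by positivity
  have hKt : 0 < K * t := by positivity
  set φ : ℝ → ℝ := fun u => b*u^2 + d*u + t * g u with hφ
  have hφc : Continuous φ := by fun_prop
  have hmem1 : |(-(K*t))| ≤ K * t := by rw [abs_neg, abs_of_pos hKt]
  have hmem2 : |K*t| ≤ K * t := by rw [abs_of_pos hKt]
  have hneg : φ (-(K*t)) ≤ 0 := by
    have hg1 : |g (-(K*t))| ≤ Gs := hgb _ hmem1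
    have hg1' : g (-(K*t)) ≤ Gs := (abs_le.1 hg1).2
    have hdK : d * K = Gs + 1 := by rw [hK]; field_simp
    have : φ (-(K*t)) = b*(K*t)^2 - d*K*t + t * g (-(K*t)) := by rw [hφ]; ring
    rw [this, hdK]
    have h1 : b*(K*t)^2 ≤ (1/2)*t := by
      have : b*(K*t)^2 = (b*K^2*t)*t := by ring
      rw [this]
      exact mul_le_mul_of_nonneg_right hsmall ht.le
    nlinarith [mul_le_mul_of_nonneg_left hg1' ht.le]
  have hpos : 0 ≤ φ (K*t) := by
    have hg1 : |g (K*t)| ≤ Gs := hgb _ hmem2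
    have hg1' : -Gs ≤ g (K*t) := (abs_le.1 hg1).1
    have hdK : d * K = Gs + 1 := by rw [hK]; field_simp
    have heq : φ (K*t) = b*(K*t)^2 + d*K*t + t * g (K*t) := by rw [hφ]; ring
    rw [heq, hdK]
    nlinarith [mul_le_mul_of_nonneg_left hg1' ht.le, sq_nonneg (K*t)]
  have hab : -(K*t) ≤ K*t := by linarith
  have := intermediate_value_Icc hab hφc.continuousOn
  obtain ⟨u, hu, hu0⟩ := this ⟨hneg, hpos⟩
  exact ⟨u, abs_le.2 ⟨hu.1, hu.2⟩, hu0⟩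

private lemma scale_bound (a b r : ℝ) (ha : 0 < a) (hr : 0 < r) (hle : r ≤ min 1 (b/a)) :
    a*r^2 ≤ b := by
  have h1 : r ≤ 1 := le_trans hle (min_le_left _ _)
  have h2 : r ≤ b/a := le_trans hle (min_le_right _ _)
  have h3 : r^2 ≤ b/a := by nlinarith
  calc a*r^2 ≤ a*(b/a) := by nlinarith
  _ = b := by field_simp

set_option maxHeartbeats 2000000 in
/-- Lemma 2.1: low-frequency Taylor expansion of the spectrum of the
compressible part of the linearized two-fluid system. -/
theorem stmt_15 (β₁ β₄ νp νm σp σm : ℝ)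
    (hβ₁ : 0 < β₁) (hβ₄ : 0 < β₄) (hνp : 0 < νp) (hνm : 0 < νm)
    (hσp : 0 < σp) (hσm : 0 < σm)
    (hD : 0 < (β₁ * νm + β₄ * νp) ^ 2 - 4 * (β₁ + β₄) * (β₁ * σm + β₄ * σp)) :
    ∃ η₁ : ℝ, 0 < η₁ ∧
      ∃ l₁ l₂ l₃ l₄ : ℝ → ℂ,
        (∀ r : ℝ, 0 < r → r ≤ η₁ →
          (∀ z : ℂ,
            z ^ 4 + (((νp + νm) * r ^ 2 : ℝ) : ℂ) * z ^ 3
              + ((((β₁ + β₄) * r ^ 2 + (σp + σm + νp * νm) * r ^ 4 : ℝ)) : ℂ) * z ^ 2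
              + ((((β₁ * νm + β₄ * νp) * r ^ 4 + (νp * σm + νm * σp) * r ^ 6 : ℝ)) : ℂ) * z
              + (((β₁ * σm + β₄ * σp) * r ^ 6 + σp * σm * r ^ 8 : ℝ) : ℂ)
            = (z - l₁ r) * (z - l₂ r) * (z - l₃ r) * (z - l₄ r))
          ∧ l₂ r = starRingEnd ℂ (l₁ r)
          ∧ (l₃ r).im = 0 ∧ (l₄ r).im = 0) ∧
        (∃ M : ℝ, ∃ δ : ℝ, 0 < δ ∧ ∀ r : ℝ, 0 < r → r ≤ δ →
          ‖(l₁ r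
              - (((-((β₁ * νp + β₄ * νm) / (2 * (β₁ + β₄))) * r ^ 2 : ℝ) : ℂ)
                + Complex.I * ((Real.sqrt (β₁ + β₄) * r : ℝ) : ℂ)))‖
            ≤ M * r ^ 3) ∧
        (∃ M : ℝ, ∃ δ : ℝ, 0 < δ ∧ ∀ r : ℝ, 0 < r → r ≤ δ →
          ‖(l₃ r
              - ((((-(β₁ * νm + β₄ * νp)
                    + Real.sqrt ((β₁ * νm + β₄ * νp) ^ 2
                        - 4 * (β₁ + β₄) * (β₁ * σm + β₄ * σp)))
                  / (2 * (β₁ + β₄)) * r ^ 2 : ℝ)) : ℂ))‖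
            ≤ M * r ^ 4) ∧
        (∃ M : ℝ, ∃ δ : ℝ, 0 < δ ∧ ∀ r : ℝ, 0 < r → r ≤ δ →
          ‖(l₄ r
              - ((((-(β₁ * νm + β₄ * νp)
                    - Real.sqrt ((β₁ * νm + β₄ * νp) ^ 2
                        - 4 * (β₁ + β₄) * (β₁ * σm + β₄ * σp)))
                  / (2 * (β₁ + β₄)) * r ^ 2 : ℝ)) : ℂ))‖
            ≤ M * r ^ 4) := by
  obtain ⟨B, hB_def⟩ : ∃ x : ℝ, x = β₁ * νm + β₄ * νp := ⟨_, rfl⟩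
  obtain ⟨C, hC_def⟩ : ∃ x : ℝ, x = β₁ * σm + β₄ * σp := ⟨_, rfl⟩
  obtain ⟨β, hβ_def⟩ : ∃ x : ℝ, x = β₁ + β₄ := ⟨_, rfl⟩
  rw [← hB_def, ← hC_def, ← hβ_def] at hD ⊢
  have hβ : 0 < β := by rw [hβ_def]; linarith
  have hB : 0 < B := by rw [hB_def]; positivity
  have hC : 0 < C := by rw [hC_def]; positivity
  obtain ⟨sD, hsD_def⟩ : ∃ x : ℝ, x = Real.sqrt (B ^ 2 - 4 * β * C) := ⟨_, rfl⟩
  rw [← hsD_def]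
  have hDpos : 0 < B ^ 2 - 4 * β * C := hD
  have hsD : 0 < sD := by rw [hsD_def]; exact Real.sqrt_pos.2 hDpos
  have hsD2 : sD ^ 2 = B ^ 2 - 4 * β * C := by rw [hsD_def]; exact Real.sq_sqrt hDpos.le
  have hsDltB : sD < B := by nlinarith [hsD2, hsD, hC, hβ]
  obtain ⟨xp, hxp_def⟩ : ∃ x : ℝ, x = (-B + sD) / (2 * β) := ⟨_, rfl⟩
  obtain ⟨xm, hxm_def⟩ : ∃ x : ℝ, x = (-B - sD) / (2 * β) := ⟨_, rfl⟩
  rw [← hxp_def, ← hxm_def]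
  have hxp_neg : xp < 0 := by
    rw [hxp_def]
    apply div_neg_of_neg_of_pos (by linarith) (by linarith)
  have hxm_neg : xm < 0 := by
    rw [hxm_def]
    apply div_neg_of_neg_of_pos (by linarith) (by linarith)
  have hxm_lt_xp : xm < xp := by
    rw [hxp_def, hxm_def]
    exact (div_lt_div_iff_of_pos_right (by linarith : (0:ℝ) < 2*β)).2 (by linarith)
  have hquadp : β * xp ^ 2 + B * xp + C = 0 := by
    rw [hxp_def]; field_simp; linear_combination hsD2
  have hquadm : β * xm ^ 2 + B * xm + C = 0 := by
    rw [hxm_def]; field_simp; linear_combination hsD2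
  have hslopep : 2 * β * xp + B = sD := by
    rw [hxp_def]; field_simp; ring
  have hslopem : 2 * β * xm + B = -sD := by
    rw [hxm_def]; field_simp; ring
  have hvieta : β * (xp * xm) = C := by
    rw [hxp_def, hxm_def]; field_simp; linear_combination -hsD2
  have hsum : β * (xp + xm) = -B := by
    rw [hxp_def, hxm_def]; field_simp; ring
  have hdiff : β * (xp - xm) = sD := by
    rw [hxp_def, hxm_def]; field_simp; ring
  -- geometric constants
  obtain ⟨W, hW_def⟩ : ∃ x : ℝ, x = -xm + 1 := ⟨_, rfl⟩
  have hW1 : 1 ≤ W := by rw [hW_def]; linarith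
  have hWpos : 0 < W := by linarith
  have hxpW : -xp ≤ W - 1 := by rw [hW_def]; linarith
  have hxmW : -xm = W - 1 := by rw [hW_def]; ring
  obtain ⟨Gs, hGs_def⟩ : ∃ x : ℝ,
      x = W^4 + (νp+νm)*W^3 + (σp+σm+νp*νm)*W^2 + (νp*σm+νm*σp)*W + σp*σm := ⟨_, rfl⟩
  have hGspos : 0 < Gs := by rw [hGs_def]; positivity
  have hGbound : ∀ w : ℝ, |w| ≤ W →
      |w^4 + (νp+νm)*w^3 + (σp+σm+νp*νm)*w^2 + (νp*σm+νm*σp)*w + σp*σm| ≤ Gs := by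
    intro w hw
    have h4 : |w|^4 ≤ W^4 := pow_le_pow_left₀ (abs_nonneg w) hw 4
    have h3 : |w|^3 ≤ W^3 := pow_le_pow_left₀ (abs_nonneg w) hw 3
    have h2 : |w|^2 ≤ W^2 := pow_le_pow_left₀ (abs_nonneg w) hw 2
    have e4 := abs_le.1 (le_trans (abs_pow w 4).le h4)
    have e3 := abs_le.1 (show |(νp+νm)*w^3| ≤ (νp+νm)*W^3 by
      rw [abs_mul, abs_of_nonneg (by positivity : (0:ℝ) ≤ νp+νm), abs_pow]
      exact mul_le_mul_of_nonneg_left h3 (by positivity))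
    have e2 := abs_le.1 (show |(σp+σm+νp*νm)*w^2| ≤ (σp+σm+νp*νm)*W^2 by
      rw [abs_mul, abs_of_nonneg (by positivity : (0:ℝ) ≤ σp+σm+νp*νm), abs_pow]
      exact mul_le_mul_of_nonneg_left h2 (by positivity))
    have e1 := abs_le.1 (show |(νp*σm+νm*σp)*w| ≤ (νp*σm+νm*σp)*W by
      rw [abs_mul, abs_of_nonneg (by positivity : (0:ℝ) ≤ νp*σm+νm*σp)]
      exact mul_le_mul_of_nonneg_left hw (by positivity))
    rw [abs_le, hGs_def]
    constructor <;> linarith [e4.1, e4.2, e3.1, e3.2, e2.1, e2.2, e1.1, e1.2, (mul_pos hσp hσm).le]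
  obtain ⟨K, hK_def⟩ : ∃ x : ℝ, x = (Gs+1)/sD := ⟨_, rfl⟩
  have hKpos : 0 < K := by rw [hK_def]; positivity
  obtain ⟨N, hN_def⟩ : ∃ x : ℝ, x = σp*σm + 2*β*W*K := ⟨_, rfl⟩
  have hNpos : 0 < N := by rw [hN_def]; positivity
  obtain ⟨M₁, hM₁_def⟩ : ∃ x : ℝ, x = 4*β*N/C := ⟨_, rfl⟩
  have hM₁pos : 0 < M₁ := by rw [hM₁_def]; positivity
  obtain ⟨Cp, hCp_def⟩ : ∃ x : ℝ, x = νp+νm+2*W := ⟨_, rfl⟩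
  have hCppos : 0 < Cp := by rw [hCp_def]; positivity
  -- the smallness threshold
  obtain ⟨η₀, hη₀_def⟩ : ∃ x : ℝ, x = min (min 1 (1/K)) (min (min 1 ((sD/4)/(β*K)))
      (min (min 1 ((1/2)/(β*K^2))) (min (min 1 ((-xp/2)/K))
      (min (min 1 ((β/2)/M₁)) (min 1 (β/Cp^2)))))) := ⟨_, rfl⟩
  have hη₀pos : 0 < η₀ := by
    rw [hη₀_def]
    have h1 : (0:ℝ) < -xp/2 := by linarith
    have hx : (0:ℝ) < (-xp/2)/K := div_pos h1 hKpos
    exact lt_min (lt_min one_pos (by positivity)) (lt_min (lt_min one_pos (by positivity))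
      (lt_min (lt_min one_pos (by positivity)) (lt_min (lt_min one_pos hx)
      (lt_min (lt_min one_pos (by positivity)) (lt_min one_pos (by positivity))))))
  have hcond : ∀ r : ℝ, 0 < r → r ≤ η₀ →
      K*r^2 ≤ 1 ∧ β*K*r^2 ≤ sD/4 ∧ β*K^2*r^2 ≤ 1/2 ∧ K*r^2 ≤ -xp/2 ∧
      M₁*r^2 ≤ β/2 ∧ Cp^2*r^2 ≤ β ∧ r ≤ 1 := by
    intro r hr hle
    rw [hη₀_def] at hle
    refine ⟨scale_bound K 1 r hKpos hr (le_trans hle ?_),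
      scale_bound (β*K) (sD/4) r (by positivity) hr (le_trans hle ?_),
      scale_bound (β*K^2) (1/2) r (by positivity) hr (le_trans hle ?_),
      scale_bound K (-xp/2) r hKpos hr (le_trans hle ?_),
      scale_bound M₁ (β/2) r hM₁pos hr (le_trans hle ?_),
      ?_,
      le_trans hle (le_trans (min_le_left _ _) (min_le_left _ _))⟩
    · exact min_le_left _ _
    · exact le_trans (min_le_right _ _) (min_le_left _ _)
    · exact le_trans (min_le_right _ _) (le_trans (min_le_right _ _) (min_le_left _ _))
    · exact le_trans (min_le_right _ _) (le_trans (min_le_right _ _)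
        (le_trans (min_le_right _ _) (min_le_left _ _)))
    · exact le_trans (min_le_right _ _) (le_trans (min_le_right _ _)
        (le_trans (min_le_right _ _) (le_trans (min_le_right _ _) (min_le_left _ _))))
    · have : Cp^2*r^2 ≤ β*1 := by
        refine scale_bound (Cp^2) (β*1) r (by positivity) hr (le_trans hle ?_)
        have : β/Cp^2 = β*1/Cp^2 := by ring_nf
        rw [← this]
        exact le_trans (min_le_right _ _) (le_trans (min_le_right _ _)
          (le_trans (min_le_right _ _) (le_trans (min_le_right _ _) (min_le_right _ _))))
      linarith
  have key : ∀ r : ℝ, 0 < r → r ≤ η₀ → ∃ y3 y4 : ℝ,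
      |y3 - xp*r^2| ≤ K*r^4 ∧ |y4 - xm*r^2| ≤ K*r^4 ∧
      (y3^4 + ((νp+νm)*r^2)*y3^3 + (β*r^2 + (σp+σm+νp*νm)*r^4)*y3^2
        + (B*r^4 + (νp*σm+νm*σp)*r^6)*y3 + (C*r^6 + σp*σm*r^8) = 0) ∧
      (y4^4 + ((νp+νm)*r^2)*y4^3 + (β*r^2 + (σp+σm+νp*νm)*r^4)*y4^2
        + (B*r^4 + (νp*σm+νm*σp)*r^6)*y4 + (C*r^6 + σp*σm*r^8) = 0) ∧
      y4 < y3 ∧ y3 < 0 := by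
    intro r hr hle
    obtain ⟨hc1, hc4, hc3, hc5, hc6, hc7, hone⟩ := hcond r hr hle
    have hr2 : 0 < r^2 := by positivity
    have hsm : β * ((Gs+1)/sD)^2 * r^2 ≤ 1/2 := by rw [← hK_def]; exact hc3
    -- root near xp
    have hbp : ∀ u : ℝ, |u| ≤ (Gs+1)/sD * r^2 →
        |(xp+u)^4 + (νp+νm)*(xp+u)^3 + (σp+σm+νp*νm)*(xp+u)^2
          + (νp*σm+νm*σp)*(xp+u) + σp*σm| ≤ Gs := by
      intro u hu
      rw [← hK_def] at hu
      have hu' := abs_le.1 hu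
      have h1' : |xp + u| ≤ W := by
        rw [abs_le]
        constructor
        · linarith [hxpW, hc1, hu'.1]
        · linarith [hxp_neg, hc1, hu'.2, hW1]
      exact hGbound _ h1'
    obtain ⟨u3, hu3b, hu3r⟩ := quad_perturb β sD Gs (r^2) hβ hsD hGspos.le hr2
      (fun u : ℝ => (xp+u)^4 + (νp+νm)*(xp+u)^3 + (σp+σm+νp*νm)*(xp+u)^2
        + (νp*σm+νm*σp)*(xp+u) + σp*σm) (by fun_prop) hbp hsm
    rw [← hK_def] at hu3b
    -- root near xm
    have hbm : ∀ u : ℝ, |u| ≤ (Gs+1)/sD * r^2 →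
        |(xm-u)^4 + (νp+νm)*(xm-u)^3 + (σp+σm+νp*νm)*(xm-u)^2
          + (νp*σm+νm*σp)*(xm-u) + σp*σm| ≤ Gs := by
      intro u hu
      rw [← hK_def] at hu
      have hu' := abs_le.1 hu
      have h1' : |xm - u| ≤ W := by
        rw [abs_le]
        constructor
        · linarith [hxmW, hc1, hu'.2]
        · linarith [hxm_neg, hc1, hu'.1, hW1]
      exact hGbound _ h1'
    obtain ⟨u4, hu4b, hu4r⟩ := quad_perturb β sD Gs (r^2) hβ hsD hGspos.le hr2
      (fun u : ℝ => (xm-u)^4 + (νp+νm)*(xm-u)^3 + (σp+σm+νp*νm)*(xm-u)^2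
        + (νp*σm+νm*σp)*(xm-u) + σp*σm) (by fun_prop) hbm hsm
    rw [← hK_def] at hu4b
    refine ⟨(xp+u3)*r^2, (xm-u4)*r^2, ?_, ?_, ?_, ?_, ?_, ?_⟩
    · have heq : (xp+u3)*r^2 - xp*r^2 = u3*r^2 := by ring
      rw [heq, abs_mul, abs_of_nonneg (sq_nonneg r)]
      calc |u3| * r^2 ≤ (K*r^2)*r^2 := mul_le_mul_of_nonneg_right hu3b (by positivity)
      _ = K*r^4 := by ring
    · have heq : (xm-u4)*r^2 - xm*r^2 = -u4*r^2 := by ring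
      rw [heq, abs_mul, abs_neg, abs_of_nonneg (sq_nonneg r)]
      calc |u4| * r^2 ≤ (K*r^2)*r^2 := mul_le_mul_of_nonneg_right hu4b (by positivity)
      _ = K*r^4 := by ring
    · have hval : β*(xp+u3)^2 + B*(xp+u3) + C = β*u3^2 + sD*u3 := by
        linear_combination hquadp + u3*hslopep
      linear_combination r^6*hval + r^6*hu3r
    · have hval : β*(xm-u4)^2 + B*(xm-u4) + C = β*u4^2 + sD*u4 := by
        linear_combination hquadm - u4*hslopem
      linear_combination r^6*hval + r^6*hu4r
    · -- separation
      have hy3lb : xp*r^2 - K*r^4 ≤ (xp+u3)*r^2 := by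
        have h := mul_le_mul_of_nonneg_right (abs_le.1 hu3b).1 hr2.le
        linarith [h]
      have hy4ub : (xm-u4)*r^2 ≤ xm*r^2 + K*r^4 := by
        have h := mul_le_mul_of_nonneg_right (abs_le.1 hu4b).1 hr2.le
        linarith [h]
      have h2 : β*K*r^2*r^2 ≤ sD/4*r^2 := mul_le_mul_of_nonneg_right hc4 (by positivity)
      have e1 : β*((xp-xm)*r^2 - 2*(K*r^4)) = sD*r^2 - 2*(β*K*r^2*r^2) := by
        linear_combination r^2*hdiff
      have hy34 : (xp-xm)*r^2 - 2*(K*r^4) ≤ (xp+u3)*r^2 - (xm-u4)*r^2 := by linarith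
      have hstep := mul_le_mul_of_nonneg_left hy34 hβ.le
      have hpos : 0 < β*((xp+u3)*r^2 - (xm-u4)*r^2) := by
        have hsDr : 0 < sD*r^2 := mul_pos hsD hr2
        linarith [hstep, e1, h2, hsDr]
      by_contra hcon
      push_neg at hcon
      have hmm := mul_le_mul_of_nonneg_left (sub_nonpos.2 hcon) hβ.le
      rw [mul_zero] at hmm
      linarith [hmm, hpos]
    · -- negativity
      have hy3ub : (xp+u3)*r^2 ≤ xp*r^2 + K*r^4 := by
        have h := mul_le_mul_of_nonneg_right (abs_le.1 hu3b).2 hr2.le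
        linarith [h]
      have h5 : K*r^2*r^2 ≤ (-xp/2)*r^2 := mul_le_mul_of_nonneg_right hc5 (by positivity)
      have : xp/2*r^2 < 0 := mul_neg_of_neg_of_pos (by linarith) hr2
      linarith [hy3ub, h5, this]
  obtain ⟨Y3, Y4, hYspec⟩ : ∃ Y3 Y4 : ℝ → ℝ, ∀ r : ℝ, 0 < r → r ≤ η₀ →
      |Y3 r - xp*r^2| ≤ K*r^4 ∧ |Y4 r - xm*r^2| ≤ K*r^4 ∧
      ((Y3 r)^4 + ((νp+νm)*r^2)*(Y3 r)^3 + (β*r^2 + (σp+σm+νp*νm)*r^4)*(Y3 r)^2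
        + (B*r^4 + (νp*σm+νm*σp)*r^6)*(Y3 r) + (C*r^6 + σp*σm*r^8) = 0) ∧
      ((Y4 r)^4 + ((νp+νm)*r^2)*(Y4 r)^3 + (β*r^2 + (σp+σm+νp*νm)*r^4)*(Y4 r)^2
        + (B*r^4 + (νp*σm+νm*σp)*r^6)*(Y4 r) + (C*r^6 + σp*σm*r^8) = 0) ∧
      Y4 r < Y3 r ∧ Y3 r < 0 := by
    refine ⟨fun r => if h : 0 < r ∧ r ≤ η₀ then (key r h.1 h.2).choose else xp*r^2,
            fun r => if h : 0 < r ∧ r ≤ η₀ then (key r h.1 h.2).choose_spec.choose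
              else xm*r^2, ?_⟩
    intro r h1 h2
    have h : 0 < r ∧ r ≤ η₀ := ⟨h1, h2⟩
    simp only [dif_pos h]
    exact (key r h.1 h.2).choose_spec.choose_spec
  refine ⟨η₀, hη₀pos,
    fun r => ((-(((νp+νm)*r^2 + Y3 r + Y4 r))/2 : ℝ) : ℂ)
      + ((Real.sqrt (4*((C*r^6 + σp*σm*r^8)/(Y3 r * Y4 r))
          - ((νp+νm)*r^2 + Y3 r + Y4 r)^2)/2 : ℝ) : ℂ) * Complex.I,
    fun r => (starRingEnd ℂ) (((-(((νp+νm)*r^2 + Y3 r + Y4 r))/2 : ℝ) : ℂ)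
      + ((Real.sqrt (4*((C*r^6 + σp*σm*r^8)/(Y3 r * Y4 r))
          - ((νp+νm)*r^2 + Y3 r + Y4 r)^2)/2 : ℝ) : ℂ) * Complex.I),
    fun r => ((Y3 r : ℝ) : ℂ),
    fun r => ((Y4 r : ℝ) : ℂ), ?_, ?_, ?_, ?_⟩
  · -- factorization and structure
    intro r hr hrle
    obtain ⟨hb3, hb4, hf3, hf4, hlt, hneg⟩ := hYspec r hr hrle
    obtain ⟨hc1, hc4, hc3, hc5, hc6, hc7, hone⟩ := hcond r hr hrle
    beta_reduce
    generalize hg3 : Y3 r = y3 at hb3 hf3 hlt hneg ⊢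
    generalize hg4 : Y4 r = y4 at hb4 hf4 hlt ⊢
    have hr2 : 0 < r^2 := by positivity
    have hy4neg : y4 < 0 := lt_trans hlt hneg
    have hy3ne : y3 ≠ 0 := ne_of_lt hneg
    have hy4ne : y4 ≠ 0 := ne_of_lt hy4neg
    have hTpos : 0 < y3*y4 := mul_pos_of_neg_of_neg hneg hy4neg
    obtain ⟨P, hP⟩ : ∃ x : ℝ, x = (νp+νm)*r^2 + y3 + y4 := ⟨_, rfl⟩
    obtain ⟨Q, hQ⟩ : ∃ x : ℝ, x = (C*r^6 + σp*σm*r^8)/(y3*y4) := ⟨_, rfl⟩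
    rw [← hP, ← hQ]
    obtain ⟨s, hs⟩ : ∃ x : ℝ, x = Real.sqrt (4*Q - P^2) := ⟨_, rfl⟩
    rw [← hs]
    have hQT : Q*(y3*y4) = C*r^6 + σp*σm*r^8 := by
      rw [hQ]; field_simp
    -- basic size bounds
    have h3low := (abs_le.1 hb3).1
    have h3up := (abs_le.1 hb3).2
    have h4low := (abs_le.1 hb4).1
    have h4up := (abs_le.1 hb4).2
    have hKr : K*r^2*r^2 ≤ 1*r^2 := mul_le_mul_of_nonneg_right hc1 hr2.le
    have hxpr := mul_le_mul_of_nonneg_right hxpW hr2.le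
    have hxmr : (-xm)*r^2 = (W-1)*r^2 := by rw [hxmW]
    have hy3absW : -y3 ≤ W*r^2 := by linarith only [h3low, hKr, hxpr]
    have hy4absW : -y4 ≤ W*r^2 := by linarith only [h4low, hKr, hxmr]
    have h5 : K*r^2*r^2 ≤ (-xp/2)*r^2 := mul_le_mul_of_nonneg_right hc5 hr2.le
    have hxple := mul_le_mul_of_nonneg_right (show -xp ≤ -xm by linarith only [hxm_lt_xp]) hr2.le
    have hy3lb : (-xp/2)*r^2 ≤ -y3 := by linarith only [h3up, h5]
    have hy4lb : (-xm/2)*r^2 ≤ -y4 := by linarith only [h4up, h5, hxple]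
    have hTlb : (-xp/2)*r^2 * ((-xm/2)*r^2) ≤ (-y3)*(-y4) :=
      mul_le_mul hy3lb hy4lb
        (mul_nonneg (by linarith only [hxm_neg] : (0:ℝ) ≤ -xm/2) hr2.le)
        (by linarith only [hneg])
    have hCr : (β*(xp*xm))*r^4 = C*r^4 := by rw [hvieta]
    have hTlb2 : C*r^4 ≤ 4*β*(y3*y4) := by
      have t := mul_le_mul_of_nonneg_left hTlb (by linarith only [hβ] : (0:ℝ) ≤ 4*β)
      linarith only [t, hCr]
    -- numerator bound
    have ha1 : |y3*(y4 - xm*r^2)| ≤ (W*r^2)*(K*r^4) := by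
      rw [abs_mul]
      refine mul_le_mul ?_ hb4 (abs_nonneg _) (mul_nonneg hWpos.le hr2.le)
      rw [abs_of_neg hneg]; exact hy3absW
    have ha2 : |xm*r^2*(y3 - xp*r^2)| ≤ (W*r^2)*(K*r^4) := by
      rw [abs_mul]
      refine mul_le_mul ?_ hb3 (abs_nonneg _) (mul_nonneg hWpos.le hr2.le)
      rw [abs_mul, abs_of_neg hxm_neg, abs_of_nonneg (sq_nonneg r)]
      exact mul_le_mul_of_nonneg_right (show -xm ≤ W by linarith only [hxmW]) hr2.le
    have htri : |y3*y4 - xp*xm*r^4| ≤ 2*W*K*r^6 := by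
      have heqn : y3*y4 - xp*xm*r^4 = y3*(y4 - xm*r^2) + xm*r^2*(y3 - xp*r^2) := by ring
      rw [heqn]
      refine (abs_add_le _ _).trans ?_
      linarith only [ha1, ha2]
    have hnum : |C*r^6 + σp*σm*r^8 - β*r^2*(y3*y4)| ≤ (σp*σm + 2*β*W*K)*r^8 := by
      have heq2 : C*r^6 + σp*σm*r^8 - β*r^2*(y3*y4)
          = σp*σm*r^8 - β*r^2*(y3*y4 - xp*xm*r^4) := by
        linear_combination (-(r^6))*hvieta
      rw [heq2, sub_eq_add_neg]
      refine (abs_add_le _ _).trans ?_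
      rw [abs_neg,
        abs_of_nonneg (mul_nonneg (mul_nonneg hσp.le hσm.le)
          (by positivity : (0:ℝ) ≤ r^8) : (0:ℝ) ≤ σp*σm*r^8),
        abs_mul, abs_of_nonneg (mul_nonneg hβ.le hr2.le)]
      have hh := mul_le_mul_of_nonneg_left htri (mul_nonneg hβ.le hr2.le)
      linarith only [hh]
    have hQsub : Q - β*r^2 = (C*r^6 + σp*σm*r^8 - β*r^2*(y3*y4))/(y3*y4) := by
      rw [hQ]; field_simp
    have hQb : |Q - β*r^2| ≤ M₁*r^4 := by
      rw [hQsub, abs_div, abs_of_pos hTpos, div_le_iff₀ hTpos]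
      have hM₁C : M₁*C = 4*β*(σp*σm + 2*β*W*K) := by
        rw [hM₁_def, hN_def]; field_simp
      have hM₁Cr : M₁*C*r^8 = 4*β*(σp*σm + 2*β*W*K)*r^8 := by
        linear_combination r^8*hM₁C
      have t := mul_le_mul_of_nonneg_left hTlb2
        (mul_nonneg hM₁pos.le (by positivity : (0:ℝ) ≤ r^4))
      have hA := mul_le_mul_of_nonneg_left hnum (by linarith only [hβ] : (0:ℝ) ≤ 4*β)
      have hfin : (4*β)*|C*r^6 + σp*σm*r^8 - β*r^2*(y3*y4)| ≤ (4*β)*(M₁*r^4*(y3*y4)) := by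
        linarith only [hA, hM₁Cr, t]
      exact le_of_mul_le_mul_left hfin (by linarith only [hβ])
    have hPb : |P| ≤ Cp*r^2 := by
      rw [hP, hCp_def, abs_le]
      have hnn : 0 ≤ (νp+νm)*r^2 := mul_nonneg (by linarith only [hνp, hνm]) hr2.le
      have hWr : 0 ≤ W*r^2 := mul_nonneg hWpos.le hr2.le
      constructor
      · linarith only [hy3absW, hy4absW, hnn]
      · linarith only [hneg, hy4neg, hWr, hnn]
    have hP2 : P^2 ≤ (Cp*r^2)^2 := by
      have := pow_le_pow_left₀ (abs_nonneg P) hPb 2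
      rwa [sq_abs] at this
    have h6 : M₁*r^2*r^2 ≤ β/2*r^2 := mul_le_mul_of_nonneg_right hc6 hr2.le
    have h7 : Cp^2*r^2*r^2 ≤ β*r^2 := mul_le_mul_of_nonneg_right hc7 hr2.le
    have hdisc : β*r^2 ≤ 4*Q - P^2 := by
      have hQlow := (abs_le.1 hQb).1
      linarith only [hQlow, h6, hP2, h7]
    have hs2 : s^2 = 4*Q - P^2 := by
      rw [hs]
      exact Real.sq_sqrt (by linarith only [hdisc, mul_pos hβ hr2])
    -- algebraic identities
    have e3 : (β*r^2+(σp+σm+νp*νm)*r^4 - (Q + y3*y4 - P*(y3+y4)))*y3^2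
        + (B*r^4+(νp*σm+νm*σp)*r^6 - (P*(y3*y4) - Q*(y3+y4)))*y3 = 0 := by
      linear_combination hf3 + y3^3*hP + hQT
    have e4 : (β*r^2+(σp+σm+νp*νm)*r^4 - (Q + y3*y4 - P*(y3+y4)))*y4^2
        + (B*r^4+(νp*σm+νm*σp)*r^6 - (P*(y3*y4) - Q*(y3+y4)))*y4 = 0 := by
      linear_combination hf4 + y4^3*hP + hQT
    have e3' : (β*r^2+(σp+σm+νp*νm)*r^4 - (Q + y3*y4 - P*(y3+y4)))*y3
        + (B*r^4+(νp*σm+νm*σp)*r^6 - (P*(y3*y4) - Q*(y3+y4))) = 0 := by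
      rcases mul_eq_zero.mp (show y3*((β*r^2+(σp+σm+νp*νm)*r^4 - (Q + y3*y4 - P*(y3+y4)))*y3
          + (B*r^4+(νp*σm+νm*σp)*r^6 - (P*(y3*y4) - Q*(y3+y4)))) = 0 from by
        linear_combination e3) with h | h
      · exact absurd h hy3ne
      · exact h
    have e4' : (β*r^2+(σp+σm+νp*νm)*r^4 - (Q + y3*y4 - P*(y3+y4)))*y4
        + (B*r^4+(νp*σm+νm*σp)*r^6 - (P*(y3*y4) - Q*(y3+y4))) = 0 := by
      rcases mul_eq_zero.mp (show y4*((β*r^2+(σp+σm+νp*νm)*r^4 - (Q + y3*y4 - P*(y3+y4)))*y4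
          + (B*r^4+(νp*σm+νm*σp)*r^6 - (P*(y3*y4) - Q*(y3+y4)))) = 0 from by
        linear_combination e4) with h | h
      · exact absurd h hy4ne
      · exact h
    have hy34ne : y3 - y4 ≠ 0 := sub_ne_zero.2 (ne_of_gt hlt)
    have hα : β*r^2+(σp+σm+νp*νm)*r^4 = Q + y3*y4 - P*(y3+y4) := by
      rcases mul_eq_zero.mp (show (y3-y4)*(β*r^2+(σp+σm+νp*νm)*r^4
          - (Q + y3*y4 - P*(y3+y4))) = 0 from by linear_combination e3' - e4') with h | h
      · exact absurd h hy34ne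
      · exact sub_eq_zero.mp h
    have hγ : B*r^4+(νp*σm+νm*σp)*r^6 = P*(y3*y4) - Q*(y3+y4) := by
      refine sub_eq_zero.mp ?_
      linear_combination e3' - y3*(sub_eq_zero.mpr hα)
    refine ⟨?_, rfl, by simp, by simp⟩
    intro z
    have hconj : (starRingEnd ℂ) (((-P/2 : ℝ) : ℂ) + ((s/2 : ℝ) : ℂ)*Complex.I)
        = ((-P/2 : ℝ) : ℂ) - ((s/2 : ℝ) : ℂ)*Complex.I := by
      rw [map_add, map_mul, Complex.conj_I, Complex.conj_ofReal, Complex.conj_ofReal]; ring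
    rw [hconj]
    have hs2C := congrArg (fun x : ℝ => (x : ℂ)) hs2
    have hαC := congrArg (fun x : ℝ => (x : ℂ)) hα
    have hγC := congrArg (fun x : ℝ => (x : ℂ)) hγ
    have hQTC := congrArg (fun x : ℝ => (x : ℂ)) hQT
    have hPC := congrArg (fun x : ℝ => (x : ℂ)) hP
    push_cast at hs2C hαC hγC hQTC hPC
    have hquadfac : (z - (((-P/2 : ℝ) : ℂ) + ((s/2 : ℝ) : ℂ)*Complex.I))
        * (z - (((-P/2 : ℝ) : ℂ) - ((s/2 : ℝ) : ℂ)*Complex.I))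
        = z^2 + (P : ℂ)*z + (Q : ℂ) := by
      push_cast
      linear_combination (-(((s : ℝ) : ℂ))^2/4) * Complex.I_sq + (1/4 : ℂ) * hs2C
    rw [hquadfac]
    push_cast
    linear_combination (-z^3)*hPC + z^2*hαC + z*hγC - hQTC
  · -- l1 asymptotics
    refine ⟨K + (M₁ + Cp^2/4)/Real.sqrt β, η₀, hη₀pos, ?_⟩
    intro r hr hrle
    obtain ⟨hb3, hb4, hf3, hf4, hlt, hneg⟩ := hYspec r hr hrle
    obtain ⟨hc1, hc4, hc3, hc5, hc6, hc7, hone⟩ := hcond r hr hrle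
    beta_reduce
    generalize hg3 : Y3 r = y3 at hb3 hf3 hlt hneg ⊢
    generalize hg4 : Y4 r = y4 at hb4 hf4 hlt ⊢
    have hr2 : 0 < r^2 := by positivity
    have hy4neg : y4 < 0 := lt_trans hlt hneg
    have hTpos : 0 < y3*y4 := mul_pos_of_neg_of_neg hneg hy4neg
    obtain ⟨P, hP⟩ : ∃ x : ℝ, x = (νp+νm)*r^2 + y3 + y4 := ⟨_, rfl⟩
    obtain ⟨Q, hQ⟩ : ∃ x : ℝ, x = (C*r^6 + σp*σm*r^8)/(y3*y4) := ⟨_, rfl⟩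
    rw [← hP, ← hQ]
    obtain ⟨s, hs⟩ : ∃ x : ℝ, x = Real.sqrt (4*Q - P^2) := ⟨_, rfl⟩
    rw [← hs]
    have h3low := (abs_le.1 hb3).1
    have h3up := (abs_le.1 hb3).2
    have h4low := (abs_le.1 hb4).1
    have h4up := (abs_le.1 hb4).2
    have hKr : K*r^2*r^2 ≤ 1*r^2 := mul_le_mul_of_nonneg_right hc1 hr2.le
    have hxpr := mul_le_mul_of_nonneg_right hxpW hr2.le
    have hxmr : (-xm)*r^2 = (W-1)*r^2 := by rw [hxmW]
    have hy3absW : -y3 ≤ W*r^2 := by linarith only [h3low, hKr, hxpr]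
    have hy4absW : -y4 ≤ W*r^2 := by linarith only [h4low, hKr, hxmr]
    have h5 : K*r^2*r^2 ≤ (-xp/2)*r^2 := mul_le_mul_of_nonneg_right hc5 hr2.le
    have hxple := mul_le_mul_of_nonneg_right (show -xp ≤ -xm by linarith only [hxm_lt_xp]) hr2.le
    have hy3lb : (-xp/2)*r^2 ≤ -y3 := by linarith only [h3up, h5]
    have hy4lb : (-xm/2)*r^2 ≤ -y4 := by linarith only [h4up, h5, hxple]
    have hTlb : (-xp/2)*r^2 * ((-xm/2)*r^2) ≤ (-y3)*(-y4) :=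
      mul_le_mul hy3lb hy4lb
        (mul_nonneg (by linarith only [hxm_neg] : (0:ℝ) ≤ -xm/2) hr2.le)
        (by linarith only [hneg])
    have hCr : (β*(xp*xm))*r^4 = C*r^4 := by rw [hvieta]
    have hTlb2 : C*r^4 ≤ 4*β*(y3*y4) := by
      have t := mul_le_mul_of_nonneg_left hTlb (by linarith only [hβ] : (0:ℝ) ≤ 4*β)
      linarith only [t, hCr]
    have ha1 : |y3*(y4 - xm*r^2)| ≤ (W*r^2)*(K*r^4) := by
      rw [abs_mul]
      refine mul_le_mul ?_ hb4 (abs_nonneg _) (mul_nonneg hWpos.le hr2.le)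
      rw [abs_of_neg hneg]; exact hy3absW
    have ha2 : |xm*r^2*(y3 - xp*r^2)| ≤ (W*r^2)*(K*r^4) := by
      rw [abs_mul]
      refine mul_le_mul ?_ hb3 (abs_nonneg _) (mul_nonneg hWpos.le hr2.le)
      rw [abs_mul, abs_of_neg hxm_neg, abs_of_nonneg (sq_nonneg r)]
      exact mul_le_mul_of_nonneg_right (show -xm ≤ W by linarith only [hxmW]) hr2.le
    have htri : |y3*y4 - xp*xm*r^4| ≤ 2*W*K*r^6 := by
      have heqn : y3*y4 - xp*xm*r^4 = y3*(y4 - xm*r^2) + xm*r^2*(y3 - xp*r^2) := by ring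
      rw [heqn]
      refine (abs_add_le _ _).trans ?_
      linarith only [ha1, ha2]
    have hnum : |C*r^6 + σp*σm*r^8 - β*r^2*(y3*y4)| ≤ (σp*σm + 2*β*W*K)*r^8 := by
      have heq2 : C*r^6 + σp*σm*r^8 - β*r^2*(y3*y4)
          = σp*σm*r^8 - β*r^2*(y3*y4 - xp*xm*r^4) := by
        linear_combination (-(r^6))*hvieta
      rw [heq2, sub_eq_add_neg]
      refine (abs_add_le _ _).trans ?_
      rw [abs_neg,
        abs_of_nonneg (mul_nonneg (mul_nonneg hσp.le hσm.le)
          (by positivity : (0:ℝ) ≤ r^8) : (0:ℝ) ≤ σp*σm*r^8),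
        abs_mul, abs_of_nonneg (mul_nonneg hβ.le hr2.le)]
      have hh := mul_le_mul_of_nonneg_left htri (mul_nonneg hβ.le hr2.le)
      linarith only [hh]
    have hQsub : Q - β*r^2 = (C*r^6 + σp*σm*r^8 - β*r^2*(y3*y4))/(y3*y4) := by
      rw [hQ]; field_simp [hneg.ne, hy4neg.ne]
    have hQb : |Q - β*r^2| ≤ M₁*r^4 := by
      rw [hQsub, abs_div, abs_of_pos hTpos, div_le_iff₀ hTpos]
      have hM₁C : M₁*C = 4*β*(σp*σm + 2*β*W*K) := by
        rw [hM₁_def, hN_def]; field_simp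
      have hM₁Cr : M₁*C*r^8 = 4*β*(σp*σm + 2*β*W*K)*r^8 := by
        linear_combination r^8*hM₁C
      have t := mul_le_mul_of_nonneg_left hTlb2
        (mul_nonneg hM₁pos.le (by positivity : (0:ℝ) ≤ r^4))
      have hA := mul_le_mul_of_nonneg_left hnum (by linarith only [hβ] : (0:ℝ) ≤ 4*β)
      have hfin : (4*β)*|C*r^6 + σp*σm*r^8 - β*r^2*(y3*y4)| ≤ (4*β)*(M₁*r^4*(y3*y4)) := by
        linarith only [hA, hM₁Cr, t]
      exact le_of_mul_le_mul_left hfin (by linarith only [hβ])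
    have hPb : |P| ≤ Cp*r^2 := by
      rw [hP, hCp_def, abs_le]
      have hnn : 0 ≤ (νp+νm)*r^2 := mul_nonneg (by linarith only [hνp, hνm]) hr2.le
      have hWr : 0 ≤ W*r^2 := mul_nonneg hWpos.le hr2.le
      constructor
      · linarith only [hy3absW, hy4absW, hnn]
      · linarith only [hneg, hy4neg, hWr, hnn]
    have hP2 : P^2 ≤ (Cp*r^2)^2 := by
      have := pow_le_pow_left₀ (abs_nonneg P) hPb 2
      rwa [sq_abs] at this
    have h6 : M₁*r^2*r^2 ≤ β/2*r^2 := mul_le_mul_of_nonneg_right hc6 hr2.le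
    have h7 : Cp^2*r^2*r^2 ≤ β*r^2 := mul_le_mul_of_nonneg_right hc7 hr2.le
    have hdisc : β*r^2 ≤ 4*Q - P^2 := by
      have hQlow := (abs_le.1 hQb).1
      linarith only [hQlow, h6, hP2, h7]
    have hdisc0 : (0:ℝ) ≤ 4*Q - P^2 := by linarith only [hdisc, mul_pos hβ hr2]
    -- real part
    have h2βne : (2*β) ≠ 0 := by
      have : (0:ℝ) < 2*β := by linarith only [hβ]
      exact this.ne'
    have hid : β*((νp+νm) + (xp+xm)) = β₁*νp + β₄*νm := by
      have h := hsum
      rw [hB_def] at h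
      rw [hβ_def] at h ⊢
      linear_combination h
    have hhalf : (β₁*νp+β₄*νm)/(2*β) = ((νp+νm) + (xp+xm))/2 := by
      rw [div_eq_div_iff h2βne two_ne_zero]
      linear_combination (-2)*hid
    have hre_eq : -P/2 + ((β₁*νp+β₄*νm)/(2*β))*r^2
        = -((y3 - xp*r^2) + (y4 - xm*r^2))/2 := by
      rw [hP, hhalf]
      ring
    have hre_bound : |-P/2 + ((β₁*νp+β₄*νm)/(2*β))*r^2| ≤ K*r^4 := by
      rw [hre_eq]
      have : |-((y3 - xp*r^2) + (y4 - xm*r^2))/2|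
          = |(y3 - xp*r^2) + (y4 - xm*r^2)|/2 := by
        rw [abs_div, abs_neg, abs_two]
      rw [this]
      have := (abs_add_le (y3 - xp*r^2) (y4 - xm*r^2)).trans
        (by linarith only [hb3, hb4] : |y3 - xp*r^2| + |y4 - xm*r^2| ≤ 2*(K*r^4))
      linarith only [this]
    -- imaginary part
    have hsqrt4 : s/2 = Real.sqrt ((4*Q - P^2)/4) := by
      rw [hs, show (4*Q - P^2)/4 = (4*Q - P^2)*(1/2)^2 by ring,
        Real.sqrt_mul hdisc0, Real.sqrt_sq (by norm_num : (0:ℝ) ≤ 1/2)]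
      ring
    have hsqY : Real.sqrt β * r = Real.sqrt (β*r^2) := by
      rw [Real.sqrt_mul hβ.le, Real.sqrt_sq hr.le]
    have hXY : |(4*Q - P^2)/4 - β*r^2| ≤ (M₁ + Cp^2/4)*r^4 := by
      have h1 := abs_le.1 hQb
      rw [abs_le]
      constructor
      · linarith only [h1.1, h1.2, hP2]
      · linarith only [h1.1, h1.2, sq_nonneg P,
          mul_nonneg (sq_nonneg Cp) (pow_nonneg hr.le 4)]
    have hsYpos : 0 < Real.sqrt (β*r^2) := Real.sqrt_pos.2 (mul_pos hβ hr2)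
    have hsβpos : 0 < Real.sqrt β := Real.sqrt_pos.2 hβ
    have him2 : |s/2 - Real.sqrt β * r| ≤ ((M₁ + Cp^2/4)/Real.sqrt β)*r^3 := by
      rw [hsqrt4, hsqY]
      refine (sqrt_diff_le _ _ (by linarith only [hdisc0]) (mul_pos hβ hr2)).trans ?_
      rw [div_le_iff₀ hsYpos, ← hsqY]
      have hfs : ((M₁ + Cp^2/4)/Real.sqrt β)*r^3 * (Real.sqrt β * r)
          = (M₁ + Cp^2/4)*r^4 := by
        field_simp
      rw [hfs]
      exact hXY
    -- assemble
    have habs : ∀ a b : ℝ, ‖(a:ℂ) + (b:ℂ)*Complex.I‖ ≤ |a| + |b| := by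
      intro a b
      refine (norm_add_le _ _).trans ?_
      rw [norm_mul, Complex.norm_real, Complex.norm_real, Complex.norm_I, mul_one,
          Real.norm_eq_abs, Real.norm_eq_abs]
    have hzeq : ((-P/2 : ℝ) : ℂ) + ((s/2 : ℝ) : ℂ)*Complex.I
        - (((-((β₁*νp+β₄*νm)/(2*β))*r^2 : ℝ) : ℂ) + Complex.I*((Real.sqrt β*r : ℝ) : ℂ))
        = ((-P/2 + ((β₁*νp+β₄*νm)/(2*β))*r^2 : ℝ) : ℂ)
          + ((s/2 - Real.sqrt β*r : ℝ) : ℂ)*Complex.I := by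
      push_cast
      ring
    rw [hzeq]
    refine (habs _ _).trans ?_
    have hr43 : K*r^4 ≤ K*r^3 := by
      have := mul_le_mul_of_nonneg_left hone
        (mul_nonneg hKpos.le (pow_nonneg hr.le 3))
      linarith only [this]
    have hM3nn : 0 ≤ (M₁ + Cp^2/4)/Real.sqrt β := by
      apply div_nonneg _ hsβpos.le
      have := sq_nonneg Cp
      linarith only [hM₁pos, this]
    linarith only [hre_bound, him2, hr43]
  · -- l3 asymptotics
    refine ⟨K, η₀, hη₀pos, ?_⟩
    intro r hr hrle
    beta_reduce
    obtain ⟨hb3, hb4, hf3, hf4, hlt, hneg⟩ := hYspec r hr hrle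
    rw [show ((Y3 r : ℝ) : ℂ) - ((xp*r^2 : ℝ) : ℂ) = (((Y3 r - xp*r^2 : ℝ)) : ℂ) by push_cast; ring,
      Complex.norm_real, Real.norm_eq_abs]
    exact hb3
  · -- l4 asymptotics
    refine ⟨K, η₀, hη₀pos, ?_⟩
    intro r hr hrle
    beta_reduce
    obtain ⟨hb3, hb4, hf3, hf4, hlt, hneg⟩ := hYspec r hr hrle
    rw [show ((Y4 r : ℝ) : ℂ) - ((xm*r^2 : ℝ) : ℂ) = (((Y4 r - xm*r^2 : ℝ)) : ℂ) by push_cast; ring,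
      Complex.norm_real, Real.norm_eq_abs]
    exact hb4
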